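/- arXiv:1801.09654 — 2 statements merged into one kernel-verified Lean document; each statement's English description precedes it below -/
import Mathlib

section
/- The cycle C₆ admits (−1/2, (√3/2)i)-revival between antipodal vertices at time 2π/3: exp(-i(2π/3)A(C₆)) e_a = −(1/2) e_a + (√3/2)i e_{a+3}. -/
open Matrix Complex BigOperators

/-- Continuous-time quantum walk `U(t) = exp(-itA)` of a real (weighted) adjacency matrix. -/
noncomputable def qwalk {V : Type*} [Fintype V] [DecidableEq V]
    (A : Matrix V V ℝ) (t : ℝ) : Matrix V V ℂ :=
  NormedSpace.exp ((-(Complex.I * (t : ℂ))) • A.map (fun x => (x : ℂ)))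

/-- Characteristic (standard basis) vector of a vertex, over `ℂ`. -/
noncomputable def eC {V : Type*} [DecidableEq V] (a : V) : V → ℂ := Pi.single a 1

/-- Characteristic (standard basis) vector of a vertex, over `ℝ`. -/
noncomputable def eR {V : Type*} [DecidableEq V] (a : V) : V → ℝ := Pi.single a 1

attribute [local instance] Matrix.linftyOpNormedRing Matrix.linftyOpNormedAlgebra
  Matrix.linftyOpNormedAddCommGroup

/-- exp of a matrix applied to an eigenvector. -/
theorem exp_mulVec_eigen {n : Type*} [Fintype n] [DecidableEq n]
    (X : Matrix n n ℂ) (v : n → ℂ) (μ : ℂ) (h : X *ᵥ v = μ • v) :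
    NormedSpace.exp X *ᵥ v = Complex.exp μ • v := by
  have hpow : ∀ k : ℕ, X ^ k *ᵥ v = μ ^ k • v := by
    intro k; induction k with
    | zero => simp
    | succ k ih =>
        rw [pow_succ, ← Matrix.mulVec_mulVec, h, Matrix.mulVec_smul, ih, smul_smul, pow_succ]
        ring_nf
  let L : Matrix n n ℂ →ₗ[ℂ] (n → ℂ) :=
    { toFun := fun M => M *ᵥ v
      map_add' := fun M N => Matrix.add_mulVec M N v
      map_smul' := fun c M => Matrix.smul_mulVec c M v }
  have hs : Summable fun k : ℕ => ((Nat.factorial k : ℂ))⁻¹ • X ^ k :=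
    NormedSpace.expSeries_summable' X
  have hμ : Summable fun k : ℕ => ((Nat.factorial k : ℂ))⁻¹ * μ ^ k := by
    simpa [smul_eq_mul] using NormedSpace.expSeries_summable' (𝕂 := ℂ) μ
  rw [NormedSpace.exp_eq_tsum ℂ]
  calc (∑' k : ℕ, ((Nat.factorial k : ℂ))⁻¹ • X ^ k) *ᵥ v
      = L.toContinuousLinearMap (∑' k : ℕ, ((Nat.factorial k : ℂ))⁻¹ • X ^ k) := rfl
    _ = ∑' k : ℕ, L.toContinuousLinearMap (((Nat.factorial k : ℂ))⁻¹ • X ^ k) :=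
        L.toContinuousLinearMap.map_tsum hs
    _ = ∑' k : ℕ, (((Nat.factorial k : ℂ))⁻¹ * μ ^ k) • v := by
        refine tsum_congr fun k => ?_
        show (((Nat.factorial k : ℂ))⁻¹ • X ^ k) *ᵥ v = _
        rw [Matrix.smul_mulVec, hpow, smul_smul]
    _ = (∑' k : ℕ, ((Nat.factorial k : ℂ))⁻¹ * μ ^ k) • v := hμ.tsum_smul_const v
    _ = Complex.exp μ • v := by
        rw [Complex.exp_eq_exp_ℂ, NormedSpace.exp_eq_tsum ℂ]
        simp [smul_eq_mul]

/-- The primitive sixth root of unity. -/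
noncomputable def zeta : ℂ := Complex.exp (((Real.pi / 3 : ℝ) : ℂ) * Complex.I)

theorem zeta_pow (m : ℕ) :
    zeta ^ m = Complex.exp ((m : ℂ) * (((Real.pi / 3 : ℝ) : ℂ) * Complex.I)) :=
  (Complex.exp_nat_mul _ m).symm

theorem zeta_cube : zeta ^ 3 = -1 := by
  rw [zeta_pow, show ((3 : ℕ) : ℂ) * (((Real.pi / 3 : ℝ) : ℂ) * Complex.I)
      = (Real.pi : ℂ) * Complex.I by push_cast; ring, Complex.exp_pi_mul_I]

theorem zeta_six : zeta ^ 6 = 1 := by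
  have h : zeta ^ 6 = (zeta ^ 3) ^ 2 := by ring
  rw [h, zeta_cube]; norm_num

theorem zeta_eq : zeta = 1 / 2 + ((Real.sqrt 3 : ℝ) : ℂ) / 2 * Complex.I := by
  rw [zeta, Complex.exp_mul_I, ← Complex.ofReal_cos, ← Complex.ofReal_sin,
    Real.cos_pi_div_three, Real.sin_pi_div_three]
  push_cast; ring

theorem zeta_sq : zeta ^ 2 = zeta - 1 := by
  have h3 : ((Real.sqrt 3 : ℝ) : ℂ) ^ 2 = 3 := by
    rw [← Complex.ofReal_pow, Real.sq_sqrt (by norm_num : (3:ℝ) ≥ 0)]; norm_num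
  rw [zeta_eq]
  linear_combination (Complex.I ^ 2 / 4) * h3 + (3 / 4) * Complex.I_sq

theorem zeta_p4 : zeta ^ 4 = -zeta := by linear_combination zeta * zeta_cube
theorem zeta_p5 : zeta ^ 5 = 1 - zeta := by linear_combination zeta ^ 2 * zeta_cube - zeta_sq
theorem zeta_p7 : zeta ^ 7 = zeta := by linear_combination zeta * (zeta ^ 3 - 1) * zeta_cube
theorem zeta_p8 : zeta ^ 8 = zeta - 1 := by
  linear_combination (zeta ^ 3 - 1) * zeta ^ 2 * zeta_cube + zeta_sq
theorem zeta_p9 : zeta ^ 9 = -1 := by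
  linear_combination (zeta ^ 6 - zeta ^ 3 + 1) * zeta_cube

theorem zeta_pow_val_add (x y : ZMod 6) :
    zeta ^ (x + y).val = zeta ^ x.val * zeta ^ y.val := by
  have h : ∀ c : ℕ, zeta ^ c = zeta ^ (c % 6) := by
    intro c
    conv_lhs => rw [← Nat.div_add_mod c 6]
    rw [pow_add, pow_mul, zeta_six, one_pow, one_mul]
  rw [← pow_add, ZMod.val_add, ← h]

/-- The adjacency matrix of C6 over ℂ. -/
def Amat : Matrix (ZMod 6) (ZMod 6) ℂ :=
  fun i j => if i = j + 1 ∨ j = i + 1 then 1 else 0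

theorem adj_mulVec (v : ZMod 6 → ℂ) (j : ZMod 6) :
    (Amat *ᵥ v) j = v (j + 1) + v (j - 1) := by
  have hne : (j + 1) ∉ ({j - 1} : Finset (ZMod 6)) := by
    simp only [Finset.mem_singleton]
    intro h
    have h2 : (2 : ZMod 6) = 0 := by linear_combination h
    exact absurd h2 (by decide)
  have hzero : ∀ x ∈ (Finset.univ : Finset (ZMod 6)),
      x ∉ ({j + 1, j - 1} : Finset (ZMod 6)) → Amat j x * v x = 0 := by
    intro x _ hx
    simp only [Finset.mem_insert, Finset.mem_singleton] at hx
    push_neg at hx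
    have hcond : ¬(j = x + 1 ∨ x = j + 1) := by
      rintro (h | h)
      · exact hx.2 (by rw [h]; ring)
      · exact hx.1 h
    show (if j = x + 1 ∨ x = j + 1 then (1:ℂ) else 0) * v x = 0
    rw [if_neg hcond, zero_mul]
  show (∑ l : ZMod 6, Amat j l * v l) = v (j + 1) + v (j - 1)
  rw [← Finset.sum_subset (Finset.subset_univ ({j + 1, j - 1} : Finset (ZMod 6))) hzero,
    Finset.sum_insert hne, Finset.sum_singleton]
  have h1 : Amat j (j + 1) = 1 := if_pos (Or.inr rfl)
  have h2 : Amat j (j - 1) = 1 := if_pos (Or.inl (by ring))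
  rw [h1, h2, one_mul, one_mul]

/-- The basic character vector. -/
noncomputable def zu (r k : ZMod 6) : ℂ := zeta ^ ((r * k).val)

/-- The shifted eigenvector. -/
noncomputable def wv (a r : ZMod 6) : ZMod 6 → ℂ := fun j => zu r (j - a)

theorem heig (a r : ZMod 6) :
    Amat *ᵥ wv a r = (zeta ^ r.val + zeta ^ (-r).val) • wv a r := by
  funext j
  rw [adj_mulVec]
  show zeta ^ ((r * ((j + 1) - a)).val) + zeta ^ ((r * ((j - 1) - a)).val)
      = (zeta ^ r.val + zeta ^ (-r).val) * zeta ^ ((r * (j - a)).val)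
  rw [show r * ((j + 1) - a) = r * (j - a) + r by ring,
    show r * ((j - 1) - a) = r * (j - a) + -r by ring,
    zeta_pow_val_add, zeta_pow_val_add]
  ring

/-- The scalar `-(i t)` for `t = 2π/3`. -/
noncomputable def cc : ℂ := -(Complex.I * ((2 * Real.pi / 3 : ℝ) : ℂ))

theorem e_two : Complex.exp (cc * 2) = zeta ^ 2 := by
  have h : cc * 2 = ((2 : ℕ) : ℂ) * (((Real.pi / 3 : ℝ) : ℂ) * Complex.I)
      + ((-1 : ℤ) : ℂ) * (2 * (Real.pi : ℂ) * Complex.I) := by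
    simp only [cc]; push_cast; ring
  rw [h, Complex.exp_add, Complex.exp_int_mul_two_pi_mul_I, mul_one, ← zeta_pow]

theorem e_one : Complex.exp (cc * 1) = zeta ^ 4 := by
  have h : cc * 1 = ((4 : ℕ) : ℂ) * (((Real.pi / 3 : ℝ) : ℂ) * Complex.I)
      + ((-1 : ℤ) : ℂ) * (2 * (Real.pi : ℂ) * Complex.I) := by
    simp only [cc]; push_cast; ring
  rw [h, Complex.exp_add, Complex.exp_int_mul_two_pi_mul_I, mul_one, ← zeta_pow]

theorem e_neg_one : Complex.exp (cc * (-1)) = zeta ^ 2 := by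
  have h : cc * (-1) = ((2 : ℕ) : ℂ) * (((Real.pi / 3 : ℝ) : ℂ) * Complex.I) := by
    simp only [cc]; push_cast; ring
  rw [h, ← zeta_pow]

theorem e_neg_two : Complex.exp (cc * (-2)) = zeta ^ 4 := by
  have h : cc * (-2) = ((4 : ℕ) : ℂ) * (((Real.pi / 3 : ℝ) : ℂ) * Complex.I) := by
    simp only [cc]; push_cast; ring
  rw [h, ← zeta_pow]

theorem usum (k : ZMod 6) :
    zu 0 k + zu 1 k + zu 2 k + zu 3 k + zu 4 k + zu 5 k = if k = 0 then 6 else 0 := by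
  have hc : ∀ x : ZMod 6, x = 0 ∨ x = 1 ∨ x = 2 ∨ x = 3 ∨ x = 4 ∨ x = 5 := by decide
  rcases hc k with rfl | rfl | rfl | rfl | rfl | rfl
  · rw [if_pos rfl]
    show zeta ^ 0 + zeta ^ 0 + zeta ^ 0 + zeta ^ 0 + zeta ^ 0 + zeta ^ 0 = 6
    norm_num
  · rw [if_neg (by decide)]
    show zeta ^ 0 + zeta ^ 1 + zeta ^ 2 + zeta ^ 3 + zeta ^ 4 + zeta ^ 5 = 0
    linear_combination zeta_sq + zeta_cube + zeta_p4 + zeta_p5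
  · rw [if_neg (by decide)]
    show zeta ^ 0 + zeta ^ 2 + zeta ^ 4 + zeta ^ 0 + zeta ^ 2 + zeta ^ 4 = 0
    linear_combination 2 * zeta_sq + 2 * zeta_p4
  · rw [if_neg (by decide)]
    show zeta ^ 0 + zeta ^ 3 + zeta ^ 0 + zeta ^ 3 + zeta ^ 0 + zeta ^ 3 = 0
    linear_combination 3 * zeta_cube
  · rw [if_neg (by decide)]
    show zeta ^ 0 + zeta ^ 4 + zeta ^ 2 + zeta ^ 0 + zeta ^ 4 + zeta ^ 2 = 0
    linear_combination 2 * zeta_sq + 2 * zeta_p4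
  · rw [if_neg (by decide)]
    show zeta ^ 0 + zeta ^ 5 + zeta ^ 4 + zeta ^ 3 + zeta ^ 2 + zeta ^ 1 = 0
    linear_combination zeta_sq + zeta_cube + zeta_p4 + zeta_p5

theorem umain (k : ZMod 6) :
    (6⁻¹ : ℂ) * (zeta ^ 2 * zu 0 k + zeta ^ 4 * zu 1 k + zeta ^ 2 * zu 2 k
        + zeta ^ 4 * zu 3 k + zeta ^ 2 * zu 4 k + zeta ^ 4 * zu 5 k)
      = (if k = 0 then -(1 / 2 : ℂ) else 0)
        + (if k = 3 then ((Real.sqrt 3 : ℝ) : ℂ) / 2 * Complex.I else 0) := by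
  have hc : ∀ x : ZMod 6, x = 0 ∨ x = 1 ∨ x = 2 ∨ x = 3 ∨ x = 4 ∨ x = 5 := by decide
  rcases hc k with rfl | rfl | rfl | rfl | rfl | rfl
  · rw [if_pos rfl, if_neg (by decide)]
    show (6⁻¹ : ℂ) * (zeta ^ 2 * zeta ^ 0 + zeta ^ 4 * zeta ^ 0 + zeta ^ 2 * zeta ^ 0
        + zeta ^ 4 * zeta ^ 0 + zeta ^ 2 * zeta ^ 0 + zeta ^ 4 * zeta ^ 0) = -(1 / 2 : ℂ) + 0
    linear_combination (1 / 2 : ℂ) * zeta_sq + (1 / 2 : ℂ) * zeta_p4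
  · rw [if_neg (by decide), if_neg (by decide)]
    show (6⁻¹ : ℂ) * (zeta ^ 2 * zeta ^ 0 + zeta ^ 4 * zeta ^ 1 + zeta ^ 2 * zeta ^ 2
        + zeta ^ 4 * zeta ^ 3 + zeta ^ 2 * zeta ^ 4 + zeta ^ 4 * zeta ^ 5) = 0 + 0
    linear_combination (6⁻¹ : ℂ) * (zeta_sq + zeta_p4 + zeta_p5 + zeta_six + zeta_p7 + zeta_p9)
  · rw [if_neg (by decide), if_neg (by decide)]
    show (6⁻¹ : ℂ) * (zeta ^ 2 * zeta ^ 0 + zeta ^ 4 * zeta ^ 2 + zeta ^ 2 * zeta ^ 4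
        + zeta ^ 4 * zeta ^ 0 + zeta ^ 2 * zeta ^ 2 + zeta ^ 4 * zeta ^ 4) = 0 + 0
    linear_combination (6⁻¹ : ℂ) * (zeta_sq + 2 * zeta_six + 2 * zeta_p4 + zeta_p8)
  · rw [if_neg (by decide), if_pos rfl]
    show (6⁻¹ : ℂ) * (zeta ^ 2 * zeta ^ 0 + zeta ^ 4 * zeta ^ 3 + zeta ^ 2 * zeta ^ 0
        + zeta ^ 4 * zeta ^ 3 + zeta ^ 2 * zeta ^ 0 + zeta ^ 4 * zeta ^ 3)
        = 0 + ((Real.sqrt 3 : ℝ) : ℂ) / 2 * Complex.I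
    linear_combination (1 / 2 : ℂ) * zeta_sq + (1 / 2 : ℂ) * zeta_p7 + zeta_eq
  · rw [if_neg (by decide), if_neg (by decide)]
    show (6⁻¹ : ℂ) * (zeta ^ 2 * zeta ^ 0 + zeta ^ 4 * zeta ^ 4 + zeta ^ 2 * zeta ^ 2
        + zeta ^ 4 * zeta ^ 0 + zeta ^ 2 * zeta ^ 4 + zeta ^ 4 * zeta ^ 2) = 0 + 0
    linear_combination (6⁻¹ : ℂ) * (zeta_sq + 2 * zeta_six + 2 * zeta_p4 + zeta_p8)
  · rw [if_neg (by decide), if_neg (by decide)]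
    show (6⁻¹ : ℂ) * (zeta ^ 2 * zeta ^ 0 + zeta ^ 4 * zeta ^ 5 + zeta ^ 2 * zeta ^ 4
        + zeta ^ 4 * zeta ^ 3 + zeta ^ 2 * zeta ^ 2 + zeta ^ 4 * zeta ^ 1) = 0 + 0
    linear_combination (6⁻¹ : ℂ) * (zeta_sq + zeta_p9 + zeta_six + zeta_p7 + zeta_p4 + zeta_p5)

theorem hdecomp (a : ZMod 6) :
    eC a = (6⁻¹ : ℂ) • (wv a 0 + wv a 1 + wv a 2 + wv a 3 + wv a 4 + wv a 5) := by
  funext j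
  simp only [Pi.smul_apply, Pi.add_apply, smul_eq_mul, wv, eC]
  rw [Pi.single_apply, usum (j - a)]
  simp only [sub_eq_zero]
  split_ifs <;> norm_num

/-- The cycle C₆ admits (−1/2, (√3/2)i)-revival between antipodal vertices at time 2π/3. -/
theorem stmt16 (a : ZMod 6) :
    (qwalk (fun i j : ZMod 6 => if i = j + 1 ∨ j = i + 1 then (1 : ℝ) else 0)
        (2 * Real.pi / 3)) *ᵥ eC a =
      (-(1 / 2) : ℂ) • eC a + ((Real.sqrt 3 / 2) * Complex.I) • eC (a + 3) := by
  have hmap : Matrix.map (fun i j : ZMod 6 => if i = j + 1 ∨ j = i + 1 then (1 : ℝ) else 0)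
      (fun x => (x : ℂ)) = Amat := by
    funext i j
    simp only [Matrix.map_apply, Amat]
    show ((if i = j + 1 ∨ j = i + 1 then (1 : ℝ) else 0 : ℝ) : ℂ) = (if i = j + 1 ∨ j = i + 1 then 1 else 0)
    split_ifs <;> norm_num
  have hX : qwalk (fun i j : ZMod 6 => if i = j + 1 ∨ j = i + 1 then (1 : ℝ) else 0)
      (2 * Real.pi / 3) = NormedSpace.exp (cc • Amat) := by
    simp only [qwalk, hmap, cc]
  rw [hX]
  have hμ : ∀ r : ZMod 6, (cc • Amat) *ᵥ wv a r
      = (cc * (zeta ^ r.val + zeta ^ (-r).val)) • wv a r := by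
    intro r
    rw [Matrix.smul_mulVec, heig, smul_smul]
  have hE : ∀ r : ZMod 6, NormedSpace.exp (cc • Amat) *ᵥ wv a r
      = Complex.exp (cc * (zeta ^ r.val + zeta ^ (-r).val)) • wv a r :=
    fun r => exp_mulVec_eigen _ _ _ (hμ r)
  have h0 : NormedSpace.exp (cc • Amat) *ᵥ wv a 0 = zeta ^ 2 • wv a 0 := by
    rw [hE 0, show zeta ^ (0 : ZMod 6).val + zeta ^ (-(0 : ZMod 6)).val = 2 from by
      show zeta ^ 0 + zeta ^ 0 = 2; norm_num, e_two]
  have h1 : NormedSpace.exp (cc • Amat) *ᵥ wv a 1 = zeta ^ 4 • wv a 1 := by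
    rw [hE 1, show zeta ^ (1 : ZMod 6).val + zeta ^ (-(1 : ZMod 6)).val = 1 from by
      show zeta ^ 1 + zeta ^ 5 = 1; linear_combination zeta_p5, e_one]
  have h2 : NormedSpace.exp (cc • Amat) *ᵥ wv a 2 = zeta ^ 2 • wv a 2 := by
    rw [hE 2, show zeta ^ (2 : ZMod 6).val + zeta ^ (-(2 : ZMod 6)).val = -1 from by
      show zeta ^ 2 + zeta ^ 4 = -1; linear_combination zeta_sq + zeta_p4, e_neg_one]
  have h3 : NormedSpace.exp (cc • Amat) *ᵥ wv a 3 = zeta ^ 4 • wv a 3 := by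
    rw [hE 3, show zeta ^ (3 : ZMod 6).val + zeta ^ (-(3 : ZMod 6)).val = -2 from by
      show zeta ^ 3 + zeta ^ 3 = -2; linear_combination 2 * zeta_cube, e_neg_two]
  have h4 : NormedSpace.exp (cc • Amat) *ᵥ wv a 4 = zeta ^ 2 • wv a 4 := by
    rw [hE 4, show zeta ^ (4 : ZMod 6).val + zeta ^ (-(4 : ZMod 6)).val = -1 from by
      show zeta ^ 4 + zeta ^ 2 = -1; linear_combination zeta_sq + zeta_p4, e_neg_one]
  have h5 : NormedSpace.exp (cc • Amat) *ᵥ wv a 5 = zeta ^ 4 • wv a 5 := by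
    rw [hE 5, show zeta ^ (5 : ZMod 6).val + zeta ^ (-(5 : ZMod 6)).val = 1 from by
      show zeta ^ 5 + zeta ^ 1 = 1; linear_combination zeta_p5, e_one]
  conv_lhs => rw [hdecomp a]
  rw [Matrix.mulVec_smul, Matrix.mulVec_add, Matrix.mulVec_add, Matrix.mulVec_add,
    Matrix.mulVec_add, Matrix.mulVec_add, h0, h1, h2, h3, h4, h5]
  funext j
  simp only [Pi.smul_apply, Pi.add_apply, smul_eq_mul, wv, eC]
  rw [umain (j - a), Pi.single_apply, Pi.single_apply]
  simp only [sub_eq_iff_eq_add', add_zero]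
  split_ifs <;> ring
end

section
/- The path P₄ admits (−cos(π/√5), i sin(π/√5))-revival between vertices 1 and 4 (and between 2 and 3) at time 2π/√5: exp(-i(2π/√5)A(P₄)) e_1 = −cos(π/√5) e_1 + i sin(π/√5) e_4. -/
open Matrix Complex BigOperators

noncomputable section
namespace P4aux

def S : ℂ := (Real.sqrt 5 : ℝ)
def ph : ℂ := (1 + S)/2
def mu : ℂ := (S - 1)/2
def Pm : Matrix (Fin 4) (Fin 4) ℂ := !![1,1,1,1; ph,-ph,mu,-mu; ph,ph,-mu,-mu; 1,-1,-1,1]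
def R : Matrix (Fin 4) (Fin 4) ℂ := !![1,ph,ph,1; 1,-ph,ph,-1; 1,mu,-mu,-1; 1,-mu,-mu,1]
def W : Matrix (Fin 4) (Fin 4) ℂ := diagonal ![(5+S)⁻¹,(5+S)⁻¹,(5-S)⁻¹,(5-S)⁻¹]
def Qm : Matrix (Fin 4) (Fin 4) ℂ := W * R
def Jm : Matrix (Fin 4) (Fin 4) ℂ := !![0,0,0,1;0,0,1,0;0,1,0,0;1,0,0,0]
def Ac : Matrix (Fin 4) (Fin 4) ℂ := !![0,1,0,0;1,0,1,0;0,1,0,1;0,0,1,0]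
def dv : Fin 4 → ℂ := ![ph,-ph,mu,-mu]
def ev : Fin 4 → ℂ := ![1,-1,-1,1]

lemma hS2 : S^2 = 5 := by
  simp [S, ← Complex.ofReal_pow, Real.sq_sqrt (by norm_num : (5:ℝ) ≥ 0)]

lemma h5p : (5:ℂ) + S ≠ 0 := by
  have h : (0:ℝ) < 5 + Real.sqrt 5 := by positivity
  simp only [S, ← Complex.ofReal_ofNat, ← Complex.ofReal_add]
  exact_mod_cast h.ne'

lemma h5m : (5:ℂ) - S ≠ 0 := by
  have h : Real.sqrt 5 < 5 := by
    nlinarith [Real.sq_sqrt (by norm_num : (5:ℝ) ≥ 0), Real.sqrt_nonneg 5]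
  have h2 : (0:ℝ) < 5 - Real.sqrt 5 := by linarith
  simp only [S, ← Complex.ofReal_ofNat, ← Complex.ofReal_sub]
  exact_mod_cast h2.ne'

lemma hGram : R * Pm = diagonal ![5+S,5+S,5-S,5-S] := by
  ext i j
  fin_cases i <;> fin_cases j <;>
    simp [R, Pm, Matrix.mul_apply, Fin.sum_univ_four, ph, mu, diagonal] <;>
    first
      | ring1
      | linear_combination hS2/2
      | linear_combination (-1/2 : ℂ)*hS2

lemma hQP : Qm * Pm = 1 := by
  rw [Qm, Matrix.mul_assoc, hGram, W, diagonal_mul_diagonal,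
    show (fun i => ![(5+S)⁻¹,(5+S)⁻¹,(5-S)⁻¹,(5-S)⁻¹] i * ![5+S,5+S,5-S,5-S] i)
        = (1 : Fin 4 → ℂ) from funext fun i => by
      fin_cases i <;> simp [inv_mul_cancel₀ h5p, inv_mul_cancel₀ h5m]]
  exact diagonal_one

lemma hPQ : Pm * Qm = 1 := mul_eq_one_comm.mpr hQP

lemma hAP : Ac * Pm = Pm * diagonal dv := by
  ext i j
  fin_cases i <;> fin_cases j <;>
    simp [Ac, Pm, dv, Matrix.mul_apply, Fin.sum_univ_four, ph, mu, diagonal] <;>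
    first
      | ring1
      | linear_combination hS2/4
      | linear_combination (-1/4 : ℂ)*hS2

lemma hJP : Jm * Pm = Pm * diagonal ev := by
  ext i j
  fin_cases i <;> fin_cases j <;>
    simp [Jm, Pm, ev, Matrix.mul_apply, Fin.sum_univ_four, diagonal]

lemma hA : Ac = Pm * diagonal dv * Qm := by
  have : Ac * (Pm * Qm) = Pm * diagonal dv * Qm := by
    rw [← Matrix.mul_assoc, hAP]
  simpa [hPQ] using this

lemma hJ : Jm = Pm * diagonal ev * Qm := by
  have : Jm * (Pm * Qm) = Pm * diagonal ev * Qm := by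
    rw [← Matrix.mul_assoc, hJP]
  simpa [hPQ] using this

end P4aux

namespace P4aux

def tC : ℝ := 2 * Real.pi / Real.sqrt 5
def al : ℝ := Real.pi / Real.sqrt 5

lemma hs_pos : (0:ℝ) < Real.sqrt 5 := Real.sqrt_pos.mpr (by norm_num)

lemma hr1 : tC * (1 + Real.sqrt 5) / 2 = al + Real.pi := by
  have h := hs_pos.ne'
  rw [tC, al]; field_simp

lemma hr2 : tC * (Real.sqrt 5 - 1) / 2 = Real.pi - al := by
  have h := hs_pos.ne'
  rw [tC, al]
  field_simp

lemma hexp_d : (NormedSpace.exp (fun k => (-(Complex.I * (tC:ℂ))) * dv k) : Fin 4 → ℂ)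
    = fun k => (-(Real.cos al) : ℂ) + (Complex.I * Real.sin al) * ev k := by
  have hrC1 : (tC:ℂ) * (1 + S) / 2 = (al:ℂ) + (Real.pi:ℂ) := by
    rw [S]; exact_mod_cast congrArg (Complex.ofReal) hr1
  have hrC2 : (tC:ℂ) * (S - 1) / 2 = (Real.pi:ℂ) - (al:ℂ) := by
    rw [S]; exact_mod_cast congrArg (Complex.ofReal) hr2
  rw [Pi.exp_def]
  funext k
  rw [← Complex.exp_eq_exp_ℂ]
  fin_cases k
  · show Complex.exp (-(Complex.I * (tC:ℂ)) * ph)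
        = -((Real.cos al : ℝ):ℂ) + Complex.I * ((Real.sin al : ℝ):ℂ) * 1
    have h : (-(Complex.I * (tC:ℂ))) * ph = ((-(al + Real.pi) : ℝ) : ℂ) * Complex.I := by
      rw [ph]; push_cast
      linear_combination (-Complex.I) * hrC1
    rw [h, Complex.exp_mul_I, ← Complex.ofReal_cos, ← Complex.ofReal_sin]
    simp [Real.cos_add, Real.sin_add]
    ring
  · show Complex.exp (-(Complex.I * (tC:ℂ)) * (-ph))
        = -((Real.cos al : ℝ):ℂ) + Complex.I * ((Real.sin al : ℝ):ℂ) * (-1)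
    have h : (-(Complex.I * (tC:ℂ))) * (-ph) = (((al + Real.pi) : ℝ) : ℂ) * Complex.I := by
      rw [ph]; push_cast
      linear_combination Complex.I * hrC1
    rw [h, Complex.exp_mul_I, ← Complex.ofReal_cos, ← Complex.ofReal_sin]
    simp [Real.cos_add, Real.sin_add]
    ring
  · show Complex.exp (-(Complex.I * (tC:ℂ)) * mu)
        = -((Real.cos al : ℝ):ℂ) + Complex.I * ((Real.sin al : ℝ):ℂ) * (-1)
    have h : (-(Complex.I * (tC:ℂ))) * mu = (((al - Real.pi) : ℝ) : ℂ) * Complex.I := by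
      rw [mu]; push_cast
      linear_combination (-Complex.I) * hrC2
    rw [h, Complex.exp_mul_I, ← Complex.ofReal_cos, ← Complex.ofReal_sin]
    simp [Real.cos_sub, Real.sin_sub]
    ring
  · show Complex.exp (-(Complex.I * (tC:ℂ)) * (-mu))
        = -((Real.cos al : ℝ):ℂ) + Complex.I * ((Real.sin al : ℝ):ℂ) * 1
    have h : (-(Complex.I * (tC:ℂ))) * (-mu) = (((Real.pi - al) : ℝ) : ℂ) * Complex.I := by
      rw [mu]; push_cast
      linear_combination Complex.I * hrC2
    rw [h, Complex.exp_mul_I, ← Complex.ofReal_cos, ← Complex.ofReal_sin]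
    simp [Real.cos_sub, Real.sin_sub]
    ring

lemma main : NormedSpace.exp ((-(Complex.I * (tC:ℂ))) • Ac)
    = (-(Real.cos al) : ℂ) • 1 + (Complex.I * Real.sin al) • Jm := by
  set a : ℂ := (-(Real.cos al) : ℂ) with ha
  set b : ℂ := Complex.I * Real.sin al with hb
  set c : ℂ := -(Complex.I * (tC:ℂ)) with hc
  have h1 : c • Ac = Pm * diagonal (fun k => c * dv k) * Qm := by
    rw [hA, show diagonal (fun k => c * dv k) = c • diagonal dv by
      rw [← diagonal_smul]; rfl]
    rw [Matrix.mul_smul, Matrix.smul_mul]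
  let U : (Matrix (Fin 4) (Fin 4) ℂ)ˣ := ⟨Pm, Qm, hPQ, hQP⟩
  have h2 := Matrix.exp_units_conj U (diagonal (fun k => c * dv k))
  have hU : (↑U : Matrix (Fin 4) (Fin 4) ℂ) = Pm := rfl
  have hUinv : (↑U⁻¹ : Matrix (Fin 4) (Fin 4) ℂ) = Qm := rfl
  rw [hU, hUinv] at h2
  rw [h1, h2, Matrix.exp_diagonal, hexp_d]
  have h3 : diagonal (fun k => a + b * ev k)
      = a • (1 : Matrix (Fin 4) (Fin 4) ℂ) + b • diagonal ev := by
    have he : (fun k => a + b * ev k)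
        = (fun k => (a • (1 : Fin 4 → ℂ)) k + (b • ev) k) := by
      funext k; simp [Pi.smul_apply, smul_eq_mul]
    rw [he, ← diagonal_add, diagonal_smul, diagonal_smul]
    congr 1
  rw [h3, Matrix.mul_add, Matrix.add_mul, Matrix.mul_smul, Matrix.mul_smul,
    Matrix.smul_mul, Matrix.smul_mul, Matrix.mul_one, hPQ, ← hJ]

end P4aux


/-- The path P₄ admits (−cos(π/√5), i sin(π/√5))-revival between vertices 1 and 4, and
between vertices 2 and 3, at time 2π/√5. -/
theorem stmt18 :
    (qwalk (!![0, 1, 0, 0; 1, 0, 1, 0; 0, 1, 0, 1; 0, 0, 1, 0] : Matrix (Fin 4) (Fin 4) ℝ)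
        (2 * Real.pi / Real.sqrt 5)) *ᵥ eC (0 : Fin 4) =
      (-(Real.cos (Real.pi / Real.sqrt 5)) : ℂ) • eC (0 : Fin 4) +
      (Complex.I * Real.sin (Real.pi / Real.sqrt 5)) • eC (3 : Fin 4) ∧
    (qwalk (!![0, 1, 0, 0; 1, 0, 1, 0; 0, 1, 0, 1; 0, 0, 1, 0] : Matrix (Fin 4) (Fin 4) ℝ)
        (2 * Real.pi / Real.sqrt 5)) *ᵥ eC (1 : Fin 4) =
      (-(Real.cos (Real.pi / Real.sqrt 5)) : ℂ) • eC (1 : Fin 4) +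
      (Complex.I * Real.sin (Real.pi / Real.sqrt 5)) • eC (2 : Fin 4) := by
  have hmap : (!![0, 1, 0, 0; 1, 0, 1, 0; 0, 1, 0, 1; 0, 0, 1, 0] :
      Matrix (Fin 4) (Fin 4) ℝ).map (fun x => (x:ℂ)) = P4aux.Ac := by
    ext i j
    fin_cases i <;> fin_cases j <;> simp [P4aux.Ac, Matrix.map_apply, vecHead, vecTail]
  have hq : qwalk (!![0, 1, 0, 0; 1, 0, 1, 0; 0, 1, 0, 1; 0, 0, 1, 0] :
        Matrix (Fin 4) (Fin 4) ℝ) (2 * Real.pi / Real.sqrt 5)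
      = (-(Real.cos (Real.pi / Real.sqrt 5)) : ℂ) • 1 +
        (Complex.I * Real.sin (Real.pi / Real.sqrt 5)) • P4aux.Jm := by
    rw [qwalk, hmap]
    exact P4aux.main
  rw [hq]
  constructor
  · funext i
    fin_cases i <;>
      simp [Matrix.add_mulVec, Matrix.smul_mulVec, Matrix.one_mulVec, P4aux.Jm, eC,
        Matrix.mulVec, dotProduct, Fin.sum_univ_four, Pi.single_apply]
  · funext i
    fin_cases i <;>
      simp [Matrix.add_mulVec, Matrix.smul_mulVec, Matrix.one_mulVec, P4aux.Jm, eC,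
        Matrix.mulVec, dotProduct, Fin.sum_univ_four, Pi.single_apply]
end
end
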